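/- Let 𝔄 = Tri(A, M, B) ⊆ 𝔄₁ = Tri(A₁, M, B₁) be triangular algebras with the same identity, A ⊆ A₁, B ⊆ B₁. If {f_n : A → A₁} and {g_n : B → B₁} are higher derivations, {h_n : M → M} are linear maps with h_n(am) = Σ_{i+j=n} f_i(a)h_j(m) and h_n(mb) = Σ_{i+j=n} h_i(m)g_j(b) for all a ∈ A, b ∈ B, m ∈ M, and {m_j} ⊆ M is any sequence, then the maps Δ_n([[a,m],[0,b]]) = [[f_n(a), Σ_{i+j=n, i≠n}(f_i(a)m_j − m_j g_i(b)) + h_n(m)],[0, g_n(b)]] form a higher derivation Δ = {Δ_n} from 𝔄 to 𝔄₁. -/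

import Mathlib

set_option linter.unusedSectionVars false

open MulOpposite TrivSqZeroExt Finset

section TriDef
variable (R A B M : Type*) [CommRing R] [Ring A] [Ring B] [Algebra R A] [Algebra R B]
  [AddCommGroup M] [Module R M] [Module A M] [Module Bᵐᵒᵖ M] [SMulCommClass A Bᵐᵒᵖ M]
  [IsScalarTower R A M] [IsScalarTower R Bᵐᵒᵖ M]

/-- left action of `A × B` on `M` through the first factor -/
instance Tri.instModuleProd : Module (A × B) M := Module.compHom M (RingHom.fst A B)

/-- right action of `A × B` on `M` through the second factor -/
instance Tri.instModuleProdOp : Module (A × B)ᵐᵒᵖ M :=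
  Module.compHom M (RingHom.op (RingHom.snd A B))

instance Tri.instSMulCommClass : SMulCommClass (A × B) (A × B)ᵐᵒᵖ M :=
  ⟨fun p q m => smul_comm p.1 (op (unop q).2) m⟩

instance Tri.instTowerL : IsScalarTower R (A × B) M :=
  ⟨fun r p m => show (r • p.1) • m = r • (p.1 • m) from smul_assoc r p.1 m⟩

instance Tri.instTowerR : IsScalarTower R (A × B)ᵐᵒᵖ M :=
  ⟨fun r q m => show (op (r • (unop q).2)) • m = r • ((op (unop q).2) • m) by
    rw [MulOpposite.op_smul]; exact smul_assoc r (op (unop q).2) m⟩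

/-- The triangular algebra `Tri(A, M, B)` of matrices `[[a, m],[0, b]]`. -/
abbrev Tri : Type _ := TrivSqZeroExt (A × B) M

variable {A B M}

/-- the matrix `[[a, m],[0, b]]` -/
def Tri.mk (a : A) (m : M) (b : B) : Tri A B M := ⟨(a, b), m⟩

end TriDef


section TripleReindex
variable {M : Type*} [AddCommMonoid M]

private def tmapA : (Σ _ : ℕ × ℕ, ℕ × ℕ) → (Σ _ : ℕ × ℕ, ℕ × ℕ) :=
  fun x => ⟨(x.2.1, x.2.2 + x.1.2), (x.2.2, x.1.2)⟩
private def tmapA' : (Σ _ : ℕ × ℕ, ℕ × ℕ) → (Σ _ : ℕ × ℕ, ℕ × ℕ) :=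
  fun x => ⟨(x.1.1 + x.2.1, x.2.2), (x.1.1, x.2.1)⟩
private def tmapB : (Σ _ : ℕ × ℕ, ℕ × ℕ) → (Σ _ : ℕ × ℕ, ℕ × ℕ) :=
  fun x => ⟨(x.2.1, x.1.2 + x.2.2), (x.1.2, x.2.2)⟩
private def tmapB' : (Σ _ : ℕ × ℕ, ℕ × ℕ) → (Σ _ : ℕ × ℕ, ℕ × ℕ) :=
  fun x => ⟨(x.1.1 + x.2.2, x.2.1), (x.1.1, x.2.2)⟩

private lemma antid_assoc (n : ℕ) (F : ℕ → ℕ → ℕ → M) :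
    ∑ ij ∈ antidiagonal n, ∑ pq ∈ antidiagonal ij.1, F pq.1 pq.2 ij.2
      = ∑ ij ∈ antidiagonal n, ∑ pq ∈ antidiagonal ij.2, F ij.1 pq.1 pq.2 := by
  rw [Finset.sum_sigma', Finset.sum_sigma']
  refine Finset.sum_nbij' tmapA tmapA' ?_ ?_ ?_ ?_ ?_ <;>
    rintro ⟨⟨i, j⟩, p, q⟩ hx <;>
    simp only [Finset.mem_sigma, Finset.HasAntidiagonal.mem_antidiagonal, tmapA, tmapA',
      Prod.mk.injEq] at * <;>
    first
      | rfl
      | exact ⟨by omega, trivial⟩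
      | rw [show i = p + q from by omega]
      | rw [show j = p + q from by omega]

private lemma antid_mid (n : ℕ) (F : ℕ → ℕ → ℕ → M) :
    ∑ ij ∈ antidiagonal n, ∑ pq ∈ antidiagonal ij.1, F pq.1 ij.2 pq.2
      = ∑ ij ∈ antidiagonal n, ∑ pq ∈ antidiagonal ij.2, F ij.1 pq.1 pq.2 := by
  rw [Finset.sum_sigma', Finset.sum_sigma']
  refine Finset.sum_nbij' tmapB tmapB' ?_ ?_ ?_ ?_ ?_ <;>
    rintro ⟨⟨i, j⟩, p, q⟩ hx <;>
    simp only [Finset.mem_sigma, Finset.HasAntidiagonal.mem_antidiagonal, tmapB, tmapB',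
      Prod.mk.injEq] at * <;>
    first
      | rfl
      | exact ⟨by omega, trivial⟩
      | rw [show i = p + q from by omega]
      | rw [show j = p + q from by omega]

private lemma filter_split {G : Type*} [AddCommGroup G] (k : ℕ) (F : ℕ × ℕ → G) :
    ∑ ij ∈ (antidiagonal k).filter (fun ij => ij.1 ≠ k), F ij
      = (∑ ij ∈ antidiagonal k, F ij) - F (k, 0) := by
  rw [eq_sub_iff_add_eq,
    ← Finset.sum_filter_add_sum_filter_not (antidiagonal k) (fun ij => ij.1 ≠ k) F]
  congr 1
  rw [show (antidiagonal k).filter (fun ij => ¬ ij.1 ≠ k) = {(k, 0)} by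
    ext ⟨x, y⟩
    simp only [Finset.mem_filter, Finset.HasAntidiagonal.mem_antidiagonal, Finset.mem_singleton,
      Prod.mk.injEq, not_not]
    omega]
  rw [Finset.sum_singleton]

end TripleReindex

section
variable {R A B A₁ B₁ M : Type*} [CommRing R]
  [Ring A] [Ring B] [Ring A₁] [Ring B₁]
  [Algebra R A] [Algebra R B] [Algebra R A₁] [Algebra R B₁]
  [AddCommGroup M] [Module R M] [Module A₁ M] [Module B₁ᵐᵒᵖ M]
  [SMulCommClass A₁ B₁ᵐᵒᵖ M] [IsScalarTower R A₁ M] [IsScalarTower R B₁ᵐᵒᵖ M]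

/-- Given higher derivations `{f_n : A → A₁}`, `{g_n : B → B₁}`, compatible maps
`{h_n : M → M}` and a sequence `{m_j} ⊆ M`, the maps
`Δ_n([[a,m],[0,b]]) = [[f_n(a), Σ_{i+j=n, i≠n}(f_i(a)m_j − m_j g_i(b)) + h_n(m)],[0, g_n(b)]]`
form a higher derivation of the triangular algebra `Tri(A,M,B)` into `Tri(A₁,M,B₁)`.
Here `A ⊆ A₁` and `B ⊆ B₁` are realized by injective algebra maps `φA`, `φB`. -/
theorem formula_gives_higher_derivation
    (φA : A →ₐ[R] A₁) (hφA : Function.Injective φA)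
    (φB : B →ₐ[R] B₁) (hφB : Function.Injective φB)
    (f : ℕ → A →ₗ[R] A₁) (g : ℕ → B →ₗ[R] B₁) (h : ℕ → M →ₗ[R] M) (mseq : ℕ → M)
    (hf0 : ∀ a, f 0 a = φA a) (hg0 : ∀ b, g 0 b = φB b) (hh0 : h 0 = LinearMap.id)
    (hf : ∀ (n : ℕ) (a a' : A),
      f n (a * a') = ∑ ij ∈ antidiagonal n, f ij.1 a * f ij.2 a')
    (hg : ∀ (n : ℕ) (b b' : B),
      g n (b * b') = ∑ ij ∈ antidiagonal n, g ij.1 b * g ij.2 b')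
    (hham : ∀ (n : ℕ) (a : A) (m : M),
      h n (φA a • m) = ∑ ij ∈ antidiagonal n, f ij.1 a • h ij.2 m)
    (hhmb : ∀ (n : ℕ) (m : M) (b : B),
      h n (op (φB b) • m) = ∑ ij ∈ antidiagonal n, op (g ij.2 b) • h ij.1 m)
    (Δ : ℕ → A → M → B → Tri A₁ B₁ M)
    (hΔ : ∀ (n : ℕ) (a : A) (m : M) (b : B),
      Δ n a m b = Tri.mk (f n a)
        ((∑ ij ∈ (antidiagonal n).filter (fun ij => ij.1 ≠ n),
            (f ij.1 a • mseq ij.2 - op (g ij.1 b) • mseq ij.2)) + h n m)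
        (g n b)) :
    ∀ (n : ℕ) (a a' : A) (m m' : M) (b b' : B),
      Δ n (a * a') (φA a • m' + op (φB b') • m) (b * b') =
        ∑ ij ∈ antidiagonal n, Δ ij.1 a m b * Δ ij.2 a' m' b' := by
  intro n a a' m m' b b'
  set T : ℕ → A → B → M := fun k x y =>
    ∑ ij ∈ antidiagonal k, (f ij.1 x • mseq ij.2 - op (g ij.1 y) • mseq ij.2) with hT
  have hS : ∀ (k : ℕ) (x : A) (y : B),
      (∑ ij ∈ (antidiagonal k).filter (fun ij => ij.1 ≠ k),
        (f ij.1 x • mseq ij.2 - op (g ij.1 y) • mseq ij.2))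
      = T k x y - (f k x • mseq 0 - op (g k y) • mseq 0) := by
    intro k x y
    rw [filter_split]
  have hTmul : T n (a * a') (b * b') =
      ∑ ij ∈ antidiagonal n, (f ij.1 a • T ij.2 a' b' + op (g ij.2 b') • T ij.1 a b) := by
    have e1 : T n (a * a') (b * b') =
        ∑ ij ∈ antidiagonal n, ∑ pq ∈ antidiagonal ij.2,
          (f ij.1 a • (f pq.1 a' • mseq pq.2)
            - op (g pq.1 b') • (op (g ij.1 b) • mseq pq.2)) := by
      rw [← antid_assoc n (fun x y z =>
        f x a • (f y a' • mseq z) - op (g y b') • (op (g x b) • mseq z))]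
      simp only [hT]
      refine Finset.sum_congr rfl fun ij _ => ?_
      rw [hf, hg, Finset.sum_smul, Finset.op_sum, Finset.sum_smul,
        ← Finset.sum_sub_distrib]
      refine Finset.sum_congr rfl fun pq _ => ?_
      rw [mul_smul, MulOpposite.op_mul, mul_smul]
    have e2 : ∑ ij ∈ antidiagonal n,
          (f ij.1 a • T ij.2 a' b' + op (g ij.2 b') • T ij.1 a b)
        = (∑ ij ∈ antidiagonal n, ∑ pq ∈ antidiagonal ij.2,
            (f ij.1 a • (f pq.1 a' • mseq pq.2) - f ij.1 a • (op (g pq.1 b') • mseq pq.2)))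
          + ∑ ij ∈ antidiagonal n, ∑ pq ∈ antidiagonal ij.1,
            (op (g ij.2 b') • (f pq.1 a • mseq pq.2)
              - op (g ij.2 b') • (op (g pq.1 b) • mseq pq.2)) := by
      rw [← Finset.sum_add_distrib]
      refine Finset.sum_congr rfl fun ij _ => ?_
      simp only [hT]
      congr 1
      · rw [Finset.smul_sum]
        exact Finset.sum_congr rfl fun pq _ => smul_sub _ _ _
      · rw [Finset.smul_sum]
        exact Finset.sum_congr rfl fun pq _ => smul_sub _ _ _
    rw [e1, e2, antid_mid n (fun x y z =>
        op (g y b') • (f x a • mseq z) - op (g y b') • (op (g x b) • mseq z)),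
      ← Finset.sum_add_distrib]
    refine Finset.sum_congr rfl fun ij _ => ?_
    rw [← Finset.sum_add_distrib]
    refine Finset.sum_congr rfl fun pq _ => ?_
    rw [smul_comm (f ij.1 a) (op (g pq.1 b')) (mseq pq.2)]
    abel
  have key : (∑ ij ∈ (antidiagonal n).filter (fun ij => ij.1 ≠ n),
        (f ij.1 (a * a') • mseq ij.2 - op (g ij.1 (b * b')) • mseq ij.2))
      = ∑ ij ∈ antidiagonal n,
          (f ij.1 a • (∑ pq ∈ (antidiagonal ij.2).filter (fun pq => pq.1 ≠ ij.2),
              (f pq.1 a' • mseq pq.2 - op (g pq.1 b') • mseq pq.2))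
           + op (g ij.2 b') • (∑ pq ∈ (antidiagonal ij.1).filter (fun pq => pq.1 ≠ ij.1),
              (f pq.1 a • mseq pq.2 - op (g pq.1 b) • mseq pq.2))) := by
    simp only [hS]
    rw [hTmul, hf n a a', hg n b b', Finset.sum_smul, Finset.op_sum, Finset.sum_smul]
    simp only [mul_smul, MulOpposite.op_mul]
    rw [← Finset.sum_sub_distrib, ← Finset.sum_sub_distrib]
    refine Finset.sum_congr rfl fun ij _ => ?_
    simp only [smul_sub]
    rw [smul_comm (f ij.1 a) (op (g ij.2 b')) (mseq 0)]
    abel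
  refine TrivSqZeroExt.ext ?_ ?_
  · simp only [hΔ, TrivSqZeroExt.fst_sum, TrivSqZeroExt.fst_mul]
    show ((f n (a * a'), g n (b * b')) : A₁ × B₁)
      = ∑ ij ∈ antidiagonal n,
          ((f ij.1 a, g ij.1 b) * (f ij.2 a', g ij.2 b') : A₁ × B₁)
    simp only [Prod.mk_mul_mk]
    refine Prod.ext ?_ ?_
    · rw [Prod.fst_sum]; simpa using hf n a a'
    · rw [Prod.snd_sum]; simpa using hg n b b'
  · simp only [hΔ, TrivSqZeroExt.snd_sum]
    show (∑ ij ∈ (antidiagonal n).filter (fun ij => ij.1 ≠ n),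
          (f ij.1 (a * a') • mseq ij.2 - op (g ij.1 (b * b')) • mseq ij.2))
        + h n (φA a • m' + op (φB b') • m)
      = ∑ ij ∈ antidiagonal n,
          (f ij.1 a • ((∑ pq ∈ (antidiagonal ij.2).filter (fun pq => pq.1 ≠ ij.2),
              (f pq.1 a' • mseq pq.2 - op (g pq.1 b') • mseq pq.2)) + h ij.2 m')
           + op (g ij.2 b') • ((∑ pq ∈ (antidiagonal ij.1).filter (fun pq => pq.1 ≠ ij.1),
              (f pq.1 a • mseq pq.2 - op (g pq.1 b) • mseq pq.2)) + h ij.1 m))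
    rw [map_add, hham, hhmb, key, ← Finset.sum_add_distrib, ← Finset.sum_add_distrib]
    refine Finset.sum_congr rfl fun ij _ => ?_
    simp only [smul_add]
    abel


end
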